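/- Let 0 ≤ δ ≤ 1/3 and n ∈ ℕ. Let Q₁ be the distribution on {−1,1} assigning probability (1+δ)/2 to 1 and (1−δ)/2 to −1, and let Q₋₁ be the distribution assigning probability (1−δ)/2 to 1 and (1+δ)/2 to −1. Then the total variation distance between the n-fold product measures Q₁ⁿ and Q₋₁ⁿ is at most δ·√(3n/2). -/

import Mathlib

open MeasureTheory

/-- The Bernoulli-type measure on `Bool` assigning probability `p` to `true`
and `1 - p` to `false`. -/
noncomputable def bernMeasure (p : ℝ) : Measure Bool :=
  ENNReal.ofReal p • Measure.dirac true + ENNReal.ofReal (1 - p) • Measure.dirac false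

instance bernMeasure_finite (p : ℝ) : IsFiniteMeasure (bernMeasure p) := by
  constructor
  rw [bernMeasure]
  simp [lt_top_iff_ne_top]

lemma bernMeasure_singleton (p : ℝ) (b : Bool) :
    bernMeasure p {b} = ENNReal.ofReal (if b then p else 1 - p) := by
  cases b <;> simp [bernMeasure, Measure.dirac_apply]

/-- Measure of a set in a finite measurable space as a sum over singletons. -/
lemma measure_eq_sum_singletons {α : Type*} [Fintype α] [MeasurableSpace α]
    [MeasurableSingletonClass α] (μ : Measure α) (A : Set α) [DecidablePred (· ∈ A)] :
    μ A = ∑ x ∈ A.toFinset, μ {x} := by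
  have hA : A = ⋃ x ∈ A.toFinset, {x} := by
    ext y; simp
  rw [show μ A = μ (⋃ x ∈ A.toFinset, {x}) from by rw [← hA]]
  rw [measure_biUnion_finset]
  · intro x hx y hy hxy
    simp [Function.onFun, Set.disjoint_singleton, hxy]
  · intro x _; exact measurableSet_singleton x

/-- Discrete Fuchs–van de Graaf style bound: difference of probabilities of an event
is bounded by `√(1 - F²)` where `F` is the fidelity. -/
lemma tv_le_sqrt_one_sub_fid {α : Type*} [Fintype α] (p q : α → ℝ)
    (hp : ∀ x, 0 ≤ p x) (hq : ∀ x, 0 ≤ q x)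
    (hp1 : ∑ x, p x = 1) (hq1 : ∑ x, q x = 1) (s : Finset α) :
    |∑ x ∈ s, p x - ∑ x ∈ s, q x| ≤
      Real.sqrt (1 - (∑ x, Real.sqrt (p x * q x)) ^ 2) := by
  classical
  set T : ℝ := (∑ x, |p x - q x|) / 2 with hT
  have hT0 : 0 ≤ T := by
    apply div_nonneg _ (by norm_num)
    exact Finset.sum_nonneg fun x _ => abs_nonneg _
  -- sum of min and max
  have hmin : ∑ x, min (p x) (q x) = 1 - T := by
    have h : ∀ x : α, min (p x) (q x) = (p x + q x - |p x - q x|) / 2 := by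
      intro x
      rcases le_total (p x) (q x) with h | h
      · rw [min_eq_left h, abs_of_nonpos (by linarith)]; ring
      · rw [min_eq_right h, abs_of_nonneg (by linarith)]; ring
    simp_rw [h]
    rw [← Finset.sum_div, Finset.sum_sub_distrib, Finset.sum_add_distrib, hp1, hq1, hT]
    ring
  have hmax : ∑ x, max (p x) (q x) = 1 + T := by
    have h : ∀ x : α, max (p x) (q x) = (p x + q x + |p x - q x|) / 2 := by
      intro x
      rcases le_total (p x) (q x) with h | h
      · rw [max_eq_right h, abs_of_nonpos (by linarith)]; ring
      · rw [max_eq_left h, abs_of_nonneg (by linarith)]; ring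
    simp_rw [h]
    rw [← Finset.sum_div, Finset.sum_add_distrib, Finset.sum_add_distrib, hp1, hq1, hT]
    ring
  -- step 1: |P(s) - Q(s)| ≤ T
  have step1 : |∑ x ∈ s, p x - ∑ x ∈ s, q x| ≤ T := by
    have key : ∀ t : Finset α, ∑ x ∈ t, p x - ∑ x ∈ t, q x ≤ T := by
      intro t
      have h1 : ∑ x ∈ t, p x - ∑ x ∈ t, q x = ∑ x ∈ t, (p x - q x) := by
        rw [Finset.sum_sub_distrib]
      have h2 : ∑ x ∈ t, (p x - q x) ≤ ∑ x ∈ t, max (p x - q x) 0 :=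
        Finset.sum_le_sum fun x _ => le_max_left _ _
      have h3 : ∑ x ∈ t, max (p x - q x) 0 ≤ ∑ x, max (p x - q x) 0 := by
        apply Finset.sum_le_sum_of_subset_of_nonneg (Finset.subset_univ t)
        intro x _ _; exact le_max_right _ _
      have h4 : ∑ x, max (p x - q x) 0 = T := by
        have h : ∀ x : α, max (p x - q x) 0 = ((p x - q x) + |p x - q x|) / 2 := by
          intro x
          rcases le_total (p x - q x) 0 with h | h
          · rw [max_eq_right h, abs_of_nonpos h]; ring
          · rw [max_eq_left h, abs_of_nonneg h]; ring
        simp_rw [h]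
        rw [← Finset.sum_div, Finset.sum_add_distrib, Finset.sum_sub_distrib,
          hp1, hq1, hT]
        ring
      rw [h1]; exact h2.trans (h3.trans_eq h4)
    rw [abs_sub_le_iff]
    constructor
    · exact key s
    · have hk := key sᶜ
      have hps : ∑ x ∈ s, p x + ∑ x ∈ sᶜ, p x = 1 := by
        rw [Finset.sum_add_sum_compl, hp1]
      have hqs : ∑ x ∈ s, q x + ∑ x ∈ sᶜ, q x = 1 := by
        rw [Finset.sum_add_sum_compl, hq1]
      linarith
  -- step 2: T ≤ √(1 - F²)
  have step2 : T ≤ Real.sqrt (1 - (∑ x, Real.sqrt (p x * q x)) ^ 2) := by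
    have cs : (∑ x, Real.sqrt (p x * q x)) ^ 2 ≤
        (∑ x, min (p x) (q x)) * ∑ x, max (p x) (q x) := by
      apply Finset.sum_sq_le_sum_mul_sum_of_sq_eq_mul
      · intro x _; exact le_min (hp x) (hq x)
      · intro x _; exact le_max_of_le_left (hp x)
      · intro x _
        rw [Real.sq_sqrt (mul_nonneg (hp x) (hq x)), min_mul_max]
    rw [hmin, hmax] at cs
    have h2 : T ^ 2 ≤ 1 - (∑ x, Real.sqrt (p x * q x)) ^ 2 := by nlinarith
    calc T = Real.sqrt (T ^ 2) := by rw [Real.sqrt_sq hT0]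
    _ ≤ _ := Real.sqrt_le_sqrt h2
  exact step1.trans step2

theorem stmt3 (δ : ℝ) (h0 : 0 ≤ δ) (h1 : δ ≤ 1/3) (n : ℕ)
    (A : Set (Fin n → Bool)) (hA : MeasurableSet A) :
    |(Measure.pi (fun _ : Fin n => bernMeasure ((1 + δ) / 2)) A).toReal -
      (Measure.pi (fun _ : Fin n => bernMeasure ((1 - δ) / 2)) A).toReal|
      ≤ δ * Real.sqrt (3 * n / 2) := by
  classical
  have hδ1 : δ ≤ 1 := h1.trans (by norm_num)
  -- weight functions
  set w1 : Bool → ℝ := fun b => if b then (1 + δ) / 2 else 1 - (1 + δ) / 2 with hw1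
  set w2 : Bool → ℝ := fun b => if b then (1 - δ) / 2 else 1 - (1 - δ) / 2 with hw2
  have hw1nn : ∀ b, 0 ≤ w1 b := by
    intro b; cases b <;> simp only [hw1, if_true, if_false, Bool.false_eq_true] <;> linarith
  have hw2nn : ∀ b, 0 ≤ w2 b := by
    intro b; cases b <;> simp only [hw2, if_true, if_false, Bool.false_eq_true] <;> linarith
  set p : (Fin n → Bool) → ℝ := fun x => ∏ i, w1 (x i) with hp
  set q : (Fin n → Bool) → ℝ := fun x => ∏ i, w2 (x i) with hq
  have hpnn : ∀ x, 0 ≤ p x := fun x => Finset.prod_nonneg fun i _ => hw1nn _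
  have hqnn : ∀ x, 0 ≤ q x := fun x => Finset.prod_nonneg fun i _ => hw2nn _
  -- measures as sums
  have key : ∀ w : Bool → ℝ, (∀ b, 0 ≤ w b) →
      ∀ c : ℝ, (∀ b, w b = if b then c else 1 - c) →
      (Measure.pi (fun _ : Fin n => bernMeasure c) A).toReal =
        ∑ x ∈ A.toFinset, ∏ i, w (x i) := by
    intro w hwnn c hwc
    rw [measure_eq_sum_singletons]
    rw [ENNReal.toReal_sum]
    · apply Finset.sum_congr rfl
      intro x _
      have hx : ({x} : Set (Fin n → Bool)) = Set.univ.pi fun i => {x i} := by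
        ext y; simp [funext_iff]
      rw [hx, Measure.pi_pi]
      have h : ∀ i : Fin n, bernMeasure c {x i} = ENNReal.ofReal (w (x i)) := by
        intro i; rw [bernMeasure_singleton, hwc]
      simp_rw [h]
      rw [← ENNReal.ofReal_prod_of_nonneg fun i _ => hwnn _,
        ENNReal.toReal_ofReal (Finset.prod_nonneg fun i _ => hwnn _)]
    · intro x _
      exact (measure_lt_top _ _).ne
  have hP := key w1 hw1nn ((1 + δ) / 2) (fun b => by cases b <;> simp [hw1])
  have hQ := key w2 hw2nn ((1 - δ) / 2) (fun b => by cases b <;> simp [hw2])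
  rw [hP, hQ]
  -- sums are 1
  have hsum : ∀ w : Bool → ℝ, (∑ b, w b = 1) →
      ∑ x : Fin n → Bool, ∏ i, w (x i) = 1 := by
    intro w hw
    rw [← Fintype.piFinset_univ, ← Finset.prod_univ_sum]
    have h1 : w true + w false = 1 := by simpa using hw
    simp [h1]
  have hp1 : ∑ x, p x = 1 := hsum w1 (by simp [hw1])
  have hq1 : ∑ x, q x = 1 := hsum w2 (by simp [hw2])
  -- fidelity computation
  have hδsq : (0:ℝ) ≤ 1 - δ ^ 2 := by nlinarith
  have hmul : ∀ x : Fin n → Bool, p x * q x = ((1 - δ ^ 2) / 4) ^ n := by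
    intro x
    rw [hp, hq]
    dsimp only
    rw [← Finset.prod_mul_distrib]
    have h : ∀ i : Fin n, w1 (x i) * w2 (x i) = (1 - δ ^ 2) / 4 := by
      intro i; cases x i <;>
        simp only [hw1, hw2, if_true, if_false, Bool.false_eq_true] <;> ring
    rw [Finset.prod_congr rfl fun i _ => h i]
    simp
    rw [div_pow]
  have hF : (∑ x : Fin n → Bool, Real.sqrt (p x * q x)) ^ 2 = (1 - δ ^ 2) ^ n := by
    simp_rw [hmul]
    rw [Finset.sum_const, Finset.card_univ]
    have hcard : Fintype.card (Fin n → Bool) = 2 ^ n := by simp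
    rw [hcard, nsmul_eq_mul]
    push_cast
    rw [mul_pow, Real.sq_sqrt (by positivity)]
    rw [← pow_mul, mul_comm n 2, pow_mul]
    norm_num
    rw [← mul_pow]
    congr 1
    ring
  -- apply the main lemma
  have main := tv_le_sqrt_one_sub_fid p q hpnn hqnn hp1 hq1 A.toFinset
  rw [hF] at main
  refine main.trans ?_
  have hbern : 1 - δ ^ 2 * n ≤ (1 - δ ^ 2) ^ n := by
    have h := one_add_mul_le_pow (a := -δ ^ 2) (by nlinarith) n
    have : 1 + (n : ℝ) * (-δ ^ 2) = 1 - δ ^ 2 * n := by ring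
    rw [this] at h
    have h2 : (1 : ℝ) + (-δ ^ 2) = 1 - δ ^ 2 := by ring
    rw [h2] at h
    exact h
  calc Real.sqrt (1 - (1 - δ ^ 2) ^ n) ≤ Real.sqrt (δ ^ 2 * n) := by
        apply Real.sqrt_le_sqrt; linarith
    _ = δ * Real.sqrt n := by
        rw [Real.sqrt_mul (sq_nonneg δ), Real.sqrt_sq h0]
    _ ≤ δ * Real.sqrt (3 * n / 2) := by
        apply mul_le_mul_of_nonneg_left _ h0
        apply Real.sqrt_le_sqrt
        have : (0:ℝ) ≤ (n : ℝ) := Nat.cast_nonneg n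
        linarith
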